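/- For every integer k ≥ 3, the function c ↦ ((c−1)/(c+1))^{2k} − (2kc/(c+1)² − 1)² is strictly positive for all sufficiently large c; i.e., every mode k ≥ 3 of the elliptic vortex becomes unstable for large enough aspect ratio. Specifically, as c → ∞, ((c−1)/(c+1))^{2k} → 1 while (2kc/(c+1)² − 1)² → 1, and there exists c_k > 1 such that for c in a nonempty open interval beyond c_k the expression is positive. -/
import Mathlib


open Filter

/-- Third-order alternating Bernoulli bound: for `0 ≤ x ≤ 1`,
`(1-x)^k ≥ 1 - kx + C(k,2)x² - C(k,3)x³`. -/
lemma bern3 (k : ℕ) : ∀ x : ℝ, 0 ≤ x → x ≤ 1 →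
    1 - (k:ℝ)*x + ((k:ℝ)*((k:ℝ)-1)/2)*x^2 - ((k:ℝ)*((k:ℝ)-1)*((k:ℝ)-2)/6)*x^3
      ≤ (1-x)^k := by
  induction k with
  | zero => intro x hx hx1; norm_num
  | succ n ih =>
    intro x hx hx1
    have h1 : (0:ℝ) ≤ 1 - x := by linarith
    have h2 := ih x hx hx1
    have h3 : (1-x)*(1 - (n:ℝ)*x + ((n:ℝ)*((n:ℝ)-1)/2)*x^2
        - ((n:ℝ)*((n:ℝ)-1)*((n:ℝ)-2)/6)*x^3) ≤ (1-x)^(n+1) := by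
      have hps : (1-x)^(n+1) = (1-x)*(1-x)^n := by ring
      rw [hps]
      exact mul_le_mul_of_nonneg_left h2 h1
    have h4 : (0:ℝ) ≤ (n:ℝ)*((n:ℝ)-1)*((n:ℝ)-2) := by
      rcases n with _|_|_|m
      · norm_num
      · norm_num
      · norm_num
      · have : ((m:ℝ)+3)*(((m:ℝ)+3)-1)*(((m:ℝ)+3)-2) = ((m:ℝ)+3)*((m:ℝ)+2)*((m:ℝ)+1) := by
          ring
        push_cast
        have hm : (0:ℝ) ≤ (m:ℝ) := Nat.cast_nonneg m
        nlinarith [mul_nonneg (mul_nonneg hm hm) hm, mul_nonneg hm hm, hm]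
    have hx4 : (0:ℝ) ≤ x^4 := by positivity
    have h5 : 1 - ((n:ℕ)+1:ℝ)*x + ((((n:ℕ)+1:ℝ))*((((n:ℕ)+1:ℝ))-1)/2)*x^2
        - ((((n:ℕ)+1:ℝ))*((((n:ℕ)+1:ℝ))-1)*((((n:ℕ)+1:ℝ))-2)/6)*x^3
        ≤ (1-x)*(1 - (n:ℝ)*x + ((n:ℝ)*((n:ℝ)-1)/2)*x^2
        - ((n:ℝ)*((n:ℝ)-1)*((n:ℝ)-2)/6)*x^3) := by
      nlinarith [mul_nonneg h4 hx4]
    push_cast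
    push_cast at h3 h5
    linarith

/-- Every mode k ≥ 3 of the elliptic vortex becomes unstable for large enough
aspect ratio: ((c−1)/(c+1))^{2k} − (2kc/(c+1)² − 1)² is strictly positive for
all sufficiently large c; in particular some c > 1 makes it positive. -/
theorem love_modes_unstable_large_aspect (k : ℕ) (hk : 3 ≤ k) :
    (∀ᶠ c : ℝ in atTop,
      0 < ((c - 1) / (c + 1)) ^ (2 * k) - (2 * k * c / (c + 1) ^ 2 - 1) ^ 2) ∧
    ∃ c : ℝ, 1 < c ∧
      0 < ((c - 1) / (c + 1)) ^ (2 * k) - (2 * k * c / (c + 1) ^ 2 - 1) ^ 2 := by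
  have hk' : (3:ℝ) ≤ (k:ℝ) := by exact_mod_cast hk
  have key : ∀ᶠ c : ℝ in atTop,
      0 < ((c - 1) / (c + 1)) ^ (2 * k) - (2 * k * c / (c + 1) ^ 2 - 1) ^ 2 := by
    filter_upwards [eventually_ge_atTop (2*(k:ℝ))] with c hc
    have hc6 : (6:ℝ) ≤ c := by linarith
    have hc1 : (0:ℝ) < c + 1 := by linarith
    set x : ℝ := 2/(c+1) with hxdef
    have hx0 : 0 < x := by positivity
    have hx1 : x ≤ 1 := by rw [hxdef, div_le_one hc1]; linarith
    have hA : (c-1)/(c+1) = 1 - x := by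
      rw [hxdef]; field_simp; ring
    have hB : 2*(k:ℝ)*c/(c+1)^2 - 1 = (k:ℝ)*x - ((k:ℝ)/2)*x^2 - 1 := by
      rw [hxdef]; field_simp; ring
    have hAB := bern3 k x hx0.le hx1
    -- kx < 1
    have hkx : (k:ℝ)*x < 1 := by
      rw [hxdef]
      rw [mul_div_assoc'] -- k * (2/(c+1)) = k*2/(c+1)
      rw [div_lt_one hc1]
      linarith
    -- A + B > 0
    have hsum : 0 < (1-x)^k + ((k:ℝ)*x - ((k:ℝ)/2)*x^2 - 1) := by
      have hpos1 : (0:ℝ) < (k:ℝ)*((k:ℝ)-2)/6 := by nlinarith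
      have hpos2 : (0:ℝ) < 3 - ((k:ℝ)-1)*x := by nlinarith
      have h5 : 0 < ((k:ℝ)*((k:ℝ)-2)/6) * x^2 * (3 - ((k:ℝ)-1)*x) :=
        mul_pos (mul_pos hpos1 (pow_pos hx0 2)) hpos2
      nlinarith [h5, hAB]
    -- A - B > 0
    have hdiff : 0 < (1-x)^k - ((k:ℝ)*x - ((k:ℝ)/2)*x^2 - 1) := by
      have hA0 : (0:ℝ) ≤ (1-x)^k := pow_nonneg (by linarith) k
      have : (0:ℝ) ≤ ((k:ℝ)/2)*x^2 := by positivity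
      nlinarith
    rw [mul_comm 2 k, pow_mul, hA, hB]
    nlinarith [mul_pos hsum hdiff]
  refine ⟨key, ?_⟩
  rcases (key.and (eventually_gt_atTop (1:ℝ))).exists with ⟨c, h1, h2⟩
  exact ⟨c, h2, h1⟩
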